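/- Let G be a finite simple graph with n ≥ 2 vertices and let H = H(G) be the graph obtained from G by one step of the half-model. Then the domination number of H equals ⌈n/2⌉ + 1. -/

import Mathlib

open SimpleGraph

/-- The set of "clones": one new vertex for each subset of `V` of size `⌊|V|/2⌋`. -/
abbrev halfClones (V : Type) [Fintype V] [DecidableEq V] : Type :=
  {S : Finset V // S.card = Fintype.card V / 2}

/-- One step of the half-model: old vertices keep their adjacencies; the clone `v_S`
is adjacent exactly to the members of `S`; clones form an independent set. -/
def halfStep {V : Type} [Fintype V] [DecidableEq V] (G : SimpleGraph V) :
    SimpleGraph (V ⊕ halfClones V) where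
  Adj x y :=
    match x, y with
    | Sum.inl u, Sum.inl v => G.Adj u v
    | Sum.inl u, Sum.inr S => u ∈ S.1
    | Sum.inr S, Sum.inl u => u ∈ S.1
    | Sum.inr _, Sum.inr _ => False
  symm := by
    refine ⟨?_⟩
    rintro (u | S) (v | T) h
    · exact G.adj_symm h
    · exact h
    · exact h
    · exact h.elim
  loopless := by
    refine ⟨?_⟩
    rintro (u | S) h
    · exact G.irrefl h
    · exact h.elim

instance halfStep.instDecidableRelAdj {V : Type} [Fintype V] [DecidableEq V]
    (G : SimpleGraph V) [DecidableRel G.Adj] : DecidableRel (halfStep G).Adj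
  | Sum.inl u, Sum.inl v => inferInstanceAs (Decidable (G.Adj u v))
  | Sum.inl u, Sum.inr S => inferInstanceAs (Decidable (u ∈ S.1))
  | Sum.inr S, Sum.inl u => inferInstanceAs (Decidable (u ∈ S.1))
  | Sum.inr _, Sum.inr _ => inferInstanceAs (Decidable False)

/-- The domination number of a graph: the minimum cardinality of a set `D` of vertices
such that every vertex not in `D` has a neighbor in `D`. -/
noncomputable def dominationNum {W : Type} (G : SimpleGraph W) : ℕ :=
  sInf {k | ∃ s : Finset W, s.card = k ∧ ∀ v ∉ s, ∃ u ∈ s, G.Adj u v}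

lemma half_lower {V : Type} [Fintype V] [DecidableEq V] (G : SimpleGraph V)
    (hn : 2 ≤ Fintype.card V) (s : Finset (V ⊕ halfClones V))
    (hdom : ∀ v ∉ s, ∃ u ∈ s, (halfStep G).Adj u v) :
    (Fintype.card V + 1) / 2 + 1 ≤ s.card := by
  set n := Fintype.card V with hn'
  set A := s.toLeft with hA
  by_cases hbig : (n + 1) / 2 + 1 ≤ A.card
  · exact hbig.trans Finset.card_toLeft_le
  push_neg at hbig
  have hAle : A.card ≤ (n + 1) / 2 := by omega
  have hAcompl : Aᶜ.card = n - A.card := by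
    rw [Finset.card_compl]
  have hk1 : n / 2 - 1 ≤ Aᶜ.card := by omega
  obtain ⟨C, hCsub, hCcard⟩ := Finset.exists_subset_card_eq hk1
  have key : ∀ v ∈ Aᶜ \ C, ∀ (h : (insert v C).card = n / 2),
      Sum.inr (⟨insert v C, h⟩ : halfClones V) ∈ s := by
    intro v hv h
    by_contra hns
    obtain ⟨u, hu, hadj⟩ := hdom _ hns
    rcases u with w | T
    · have hw : w ∈ insert v C := hadj
      have hwA : w ∈ Aᶜ := by
        rcases Finset.mem_insert.1 hw with rfl | hw'
        · exact (Finset.mem_sdiff.1 hv).1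
        · exact hCsub hw'
      exact (Finset.mem_compl.1 hwA) (Finset.mem_toLeft.2 hu)
    · exact hadj
  have hcardins : ∀ v ∈ Aᶜ \ C, (insert v C).card = n / 2 := by
    intro v hv
    have hvC : v ∉ C := (Finset.mem_sdiff.1 hv).2
    rw [Finset.card_insert_of_notMem hvC, hCcard]
    omega
  have hinj : (Aᶜ \ C).card ≤ (s.toRight.image Subtype.val).card := by
    apply Finset.card_le_card_of_injOn (fun v => insert v C)
    · intro v hv
      refine Finset.mem_image.2 ⟨⟨insert v C, hcardins v hv⟩, ?_, rfl⟩
      exact Finset.mem_toRight.2 (key v hv (hcardins v hv))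
    · intro v hv w hw he
      have he' : insert v C = insert w C := he
      have : v ∈ insert w C := he' ▸ Finset.mem_insert_self v C
      rcases Finset.mem_insert.1 this with rfl | hvC
      · rfl
      · exact absurd hvC (Finset.mem_sdiff.1 hv).2
  rw [Finset.card_image_of_injective _ Subtype.val_injective] at hinj
  have hsd : (Aᶜ \ C).card = Aᶜ.card - C.card := Finset.card_sdiff_of_subset hCsub
  have htotal : A.card + s.toRight.card = s.card := Finset.card_toLeft_add_card_toRight
  omega

/-- if `G` has `n ≥ 2` vertices, then the domination number of
`H = H(G)` equals `⌈n/2⌉ + 1`. -/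
theorem stmt_18 {V : Type} [Fintype V] [DecidableEq V] (G : SimpleGraph V)
    (hn : 2 ≤ Fintype.card V) :
    dominationNum (halfStep G) = (Fintype.card V + 1) / 2 + 1 := by
  set n := Fintype.card V with hn'
  have hkle : n / 2 ≤ (Finset.univ : Finset V).card := by
    rw [Finset.card_univ]; omega
  obtain ⟨T, -, hT⟩ := Finset.exists_subset_card_eq hkle
  set D : Finset (V ⊕ halfClones V) :=
    insert (Sum.inr ⟨T, hT⟩) (Tᶜ.image Sum.inl) with hD
  have hDcard : D.card = (n + 1) / 2 + 1 := by
    rw [hD, Finset.card_insert_of_notMem (by simp),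
      Finset.card_image_of_injective _ Sum.inl_injective, Finset.card_compl, hT]
    omega
  have hDdom : ∀ v ∉ D, ∃ u ∈ D, (halfStep G).Adj u v := by
    rintro (x | ⟨S, hS⟩) hv
    · have hxT : x ∈ T := by
        by_contra hx
        exact hv (Finset.mem_insert.2 (Or.inr (Finset.mem_image.2
          ⟨x, Finset.mem_compl.2 hx, rfl⟩)))
      exact ⟨Sum.inr ⟨T, hT⟩, Finset.mem_insert_self _ _, hxT⟩
    · have hST : S ≠ T := by
        rintro rfl
        exact hv (Finset.mem_insert_self _ _)
      have : ¬ S ⊆ T := fun h => hST (Finset.eq_of_subset_of_card_le h (by omega))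
      obtain ⟨w, hwS, hwT⟩ := Finset.not_subset.1 this
      exact ⟨Sum.inl w, Finset.mem_insert.2 (Or.inr (Finset.mem_image.2
        ⟨w, Finset.mem_compl.2 hwT, rfl⟩)), hwS⟩
  have hmem : (n + 1) / 2 + 1 ∈
      {k | ∃ s : Finset (V ⊕ halfClones V), s.card = k ∧
        ∀ v ∉ s, ∃ u ∈ s, (halfStep G).Adj u v} := ⟨D, hDcard, hDdom⟩
  refine le_antisymm (Nat.sInf_le hmem) ?_
  obtain ⟨s, hscard, hsdom⟩ := Nat.sInf_mem (⟨_, hmem⟩ :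
    Set.Nonempty {k | ∃ s : Finset (V ⊕ halfClones V), s.card = k ∧
      ∀ v ∉ s, ∃ u ∈ s, (halfStep G).Adj u v})
  rw [dominationNum, ← hscard]
  exact half_lower G hn s hsdom
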